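/- arXiv:1203.2170 — 9 statements merged into one kernel-verified Lean document; each statement's English description precedes it below -/
import Mathlib

section
/- If z_{n+1} = z_n/(1 + B z_{n-1} - B z_n) and z_n ≠ 0, z_{n+1} ≠ 0 (all terms well-defined), then (1/z_{n+1} + B)(1 + B z_n) = (1/z_n + B)(1 + B z_{n-1}). That is, the quantity (1/z_n + B)(1 + B z_{n-1}) is invariant along solutions. -/
theorem stmt0 (B z1 z2 z3 : ℂ) (hB : B ≠ 0) (h2 : z2 ≠ 0) (h3 : z3 ≠ 0)
    (hd : 1 + B * z1 - B * z2 ≠ 0)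
    (hrec : z3 = z2 / (1 + B * z1 - B * z2)) :
    (1 / z3 + B) * (1 + B * z2) = (1 / z2 + B) * (1 + B * z1) := by
  subst hrec
  field_simp
  ring
end

section
/- If z_{n+1} = z_{n-1}/(1 + B z_n - B z_{n-1}) with z_{n-1}, z_n nonzero and the denominator nonzero, then (1/z_{n+1} + B)(1/z_n) = (1/z_n + B)(1/z_{n-1}). That is, (1/z_n + B)(1/z_{n-1}) is invariant along solutions. -/
theorem stmt1 (B z1 z2 z3 : ℂ) (hB : B ≠ 0) (h1 : z1 ≠ 0) (h2 : z2 ≠ 0)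
    (hd : 1 + B * z2 - B * z1 ≠ 0)
    (hrec : z3 = z1 / (1 + B * z2 - B * z1)) :
    (1 / z3 + B) * (1 / z2) = (1 / z2 + B) * (1 / z1) := by
  subst hrec
  field_simp
  ring
end

section
/- Suppose a sequence (z_n)_{n ≥ -1} of complex numbers satisfies, for all n ≥ 0, the conditions z_{n-1} ≠ 0, z_n ≠ 0, and z_{n+1} = (z_n² + B z_n - B z_{n-1})/z_{n-1}. Let C = (z_0 + B)/z_{-1}. Then z_{n+1} = C z_n - B for all n ≥ 0, and consequently z_n = C^n z_0 - B·(sum over k from 1 to n of C^{k-1}) for all n ≥ 1. -/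
/-- `z n` denotes the term of index `n - 1`, so `z 0 = z_{-1}`, `z 1 = z_0`. -/
theorem stmt6 (B : ℂ) (z : ℕ → ℂ) (hz : ∀ n, z n ≠ 0)
    (hrec : ∀ n, z (n + 2) = ((z (n + 1)) ^ 2 + B * z (n + 1) - B * z n) / z n)
    (C : ℂ) (hC : C = (z 1 + B) / z 0) :
    (∀ n, z (n + 2) = C * z (n + 1) - B) ∧
      (∀ n, 1 ≤ n → z (n + 1) = C ^ n * z 1 - B * ∑ k ∈ Finset.range n, C ^ k) := by
  have key : ∀ n, z (n + 1) + B = C * z n := by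
    intro n
    induction n with
    | zero =>
      rw [hC]
      field_simp
      rw [mul_div_assoc, div_self (hz 0), mul_one]
    | succ m ih =>
      have hm := hz m
      rw [hrec m]
      field_simp
      linear_combination z (m + 1) * ih
  have h1 : ∀ n, z (n + 2) = C * z (n + 1) - B := fun n =>
    by linear_combination key (n + 1)
  refine ⟨h1, ?_⟩
  intro n hn
  induction n with
  | zero => omega
  | succ m ih =>
    rcases Nat.eq_zero_or_pos m with hm | hm
    · subst hm
      simp [h1 0]
    · have hs : ∑ k ∈ Finset.range (m + 1), C ^ k
          = C * ∑ k ∈ Finset.range m, C ^ k + 1 := by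
        rw [Finset.mul_sum, Finset.sum_range_succ']
        simp [pow_succ']
      rw [h1 m, ih hm, hs, pow_succ]
      ring
end

section
/- Suppose a sequence (z_n)_{n ≥ -1} of complex numbers satisfies z_n ≠ -B for all n ≥ -1, z_0 ≠ 0, and z_{n+1} = (z_n² + B z_n)/(z_{n-1} + B) for all n ≥ 0. Let C = (z_{-1} + B)/z_0; then C ≠ 0, z_n ≠ 0 for all n ≥ 0, z_{n+1} = (z_n + B)/C for all n ≥ 0, and z_n = z_0/C^n + B·(sum over k from 1 to n of 1/C^k) for all n ≥ 1. -/
/-- `z n` denotes the term of index `n - 1`, so `z 0 = z_{-1}`, `z 1 = z_0`. -/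
theorem stmt7 (B : ℂ) (hB : B ≠ 0) (z : ℕ → ℂ) (hz : ∀ n, z n ≠ -B) (h0 : z 1 ≠ 0)
    (hrec : ∀ n, z (n + 2) = ((z (n + 1)) ^ 2 + B * z (n + 1)) / (z n + B))
    (C : ℂ) (hC : C = (z 0 + B) / z 1) :
    C ≠ 0 ∧ (∀ n, z (n + 1) ≠ 0) ∧ (∀ n, z (n + 2) = (z (n + 1) + B) / C) ∧
      (∀ n, 1 ≤ n → z (n + 1) = z 1 / C ^ n + B * ∑ k ∈ Finset.Icc 1 n, 1 / C ^ k) := by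
  have hzB : ∀ n, z n + B ≠ 0 := fun n h => hz n (by linear_combination h)
  have hCne : C ≠ 0 := by
    rw [hC]
    exact div_ne_zero (hzB 0) h0
  -- main induction
  have key : ∀ n, z (n + 1) ≠ 0 ∧ z n + B = C * z (n + 1) := by
    intro n
    induction n with
    | zero =>
      refine ⟨h0, ?_⟩
      rw [hC]
      field_simp
    | succ m ih =>
      obtain ⟨hne, heq⟩ := ih
      have h2 : z (m + 2) = (z (m + 1) + B) / C := by
        rw [hrec m, heq]
        field_simp
      refine ⟨?_, ?_⟩
      · rw [h2]
        exact div_ne_zero (hzB (m + 1)) hCne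
      · rw [h2]
        field_simp
  refine ⟨hCne, fun n => (key n).1, ?_, ?_⟩
  · intro n
    have := (key (n + 1)).2
    rw [this]
    field_simp
  · have hrec' : ∀ n, z (n + 2) = (z (n + 1) + B) / C := by
      intro n
      have := (key (n + 1)).2
      rw [this]; field_simp
    have haux : ∀ m : ℕ, ∑ k ∈ Finset.Icc 1 (m + 1), 1 / C ^ k
        = 1 / C + (∑ k ∈ Finset.Icc 1 m, 1 / C ^ k) / C := by
      intro m
      induction m with
      | zero => simp
      | succ p ihp =>
        have htop : ∑ k ∈ Finset.Icc 1 (p + 1), 1 / C ^ k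
            = (∑ k ∈ Finset.Icc 1 p, 1 / C ^ k) + 1 / C ^ (p + 1) :=
          Finset.sum_Icc_succ_top (by omega) _
        rw [Finset.sum_Icc_succ_top (by omega : 1 ≤ p + 2)]
        nth_rewrite 1 [ihp]
        rw [htop]
        field_simp
        rw [pow_succ]
        ring
    intro n hn
    induction n with
    | zero => omega
    | succ m ih =>
      rcases Nat.eq_zero_or_pos m with hm | hm
      · subst hm
        simp only [Finset.Icc_self, Finset.sum_singleton, pow_one]
        rw [hrec' 0]
        field_simp
        ring
      · have hI := ih hm
        rw [hrec' m, hI, haux m]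
        field_simp
        rw [pow_succ]
        ring
end

section
/- Suppose a sequence (z_n)_{n ≥ -1} of complex numbers satisfies z_0 ≠ 0, z_{-1} = -1/B, the recurrence z_{n+1} = z_n/(1 + B z_{n-1} - B z_n) for all n ≥ 0 with all denominators nonzero, and z_n ≠ 0 for all n. Then z_{2n+1} = -1/B for all n ≥ 0, and z_{2n} = -1/(2B + B² z_{2n-2}) for all n ≥ 1. -/
/-- `z n` denotes the term of index `n - 1`, so `z 0 = z_{-1}`, `z 1 = z 0`. -/
theorem stmt12 (B : ℂ) (hB : B ≠ 0) (z : ℕ → ℂ)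
    (hd : ∀ n, 1 + B * z n - B * z (n + 1) ≠ 0)
    (hrec : ∀ n, z (n + 2) = z (n + 1) / (1 + B * z n - B * z (n + 1)))
    (hz : ∀ n, z (n + 1) ≠ 0)
    (h0 : z 1 ≠ 0) (hm1 : z 0 = -1 / B) :
    (∀ n, z (2 * n + 2) = -1 / B) ∧
      (∀ n : ℕ, z (2 * n + 3) = -1 / (2 * B + B ^ 2 * z (2 * n + 1))) := by
  have hodd : ∀ n, z (2 * n + 2) = -1 / B := by
    intro n
    induction n with
    | zero =>
      have h := hrec 0
      rw [hm1] at h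
      have hden : 1 + B * (-1 / B) - B * z 1 = -(B * z 1) := by field_simp; ring
      rw [hden] at h
      rw [show 2 * 0 + 2 = 2 by ring, h]
      field_simp
    | succ k ih =>
      have h := hrec (2 * k + 2)
      rw [ih] at h
      have hden : 1 + B * (-1 / B) - B * z (2 * k + 2 + 1) = -(B * z (2 * k + 2 + 1)) := by
        field_simp; ring
      rw [hden] at h
      rw [show 2 * (k + 1) + 2 = 2 * k + 2 + 2 by ring, h]
      have hzn := hz (2 * k + 2)
      field_simp
  refine ⟨hodd, fun n => ?_⟩
  have h := hrec (2 * n + 1)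
  have he : (2 : ℕ) * n + 1 + 1 = 2 * n + 2 := by ring
  rw [he, hodd n] at h
  have hdn := hd (2 * n + 1)
  rw [he, hodd n] at hdn
  have hden : 1 + B * z (2 * n + 1) - B * (-1 / B) = 2 + B * z (2 * n + 1) := by field_simp; ring
  rw [hden] at h hdn
  have h2 : 2 * B + B ^ 2 * z (2 * n + 1) ≠ 0 := by
    have : 2 * B + B ^ 2 * z (2 * n + 1) = B * (2 + B * z (2 * n + 1)) := by ring
    rw [this]
    exact mul_ne_zero hB hdn
  rw [show 2 * n + 3 = 2 * n + 1 + 2 by ring, h]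
  field_simp
end

section
/- Suppose a sequence (z_n)_{n ≥ -1} of complex numbers satisfies z_n ≠ 0 for all n ≥ -1, z_0 ≠ -1/B, and the recurrence z_{n+1} = z_{n-1}/(1 + B z_n - B z_{n-1}) for all n ≥ 0 with all denominators nonzero. Let C = (1/z_0 + B)/z_{-1}. Then C ≠ 0 and z_{n+1} = 1/(C z_n - B) for all n ≥ 0; in particular C z_n - B ≠ 0 for all n ≥ 0. -/
/-- `z n` denotes the term of index `n - 1`, so `z 0 = z_{-1}`, `z 1 = z_0`. -/
theorem stmt14 (B : ℂ) (hB : B ≠ 0) (z : ℕ → ℂ)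
    (hz : ∀ n, z n ≠ 0) (h0 : z 1 ≠ -1 / B)
    (hd : ∀ n, 1 + B * z (n + 1) - B * z n ≠ 0)
    (hrec : ∀ n, z (n + 2) = z n / (1 + B * z (n + 1) - B * z n))
    (C : ℂ) (hC : C = (1 / z 1 + B) / z 0) :
    C ≠ 0 ∧ (∀ n, C * z (n + 1) - B ≠ 0) ∧
      (∀ n, z (n + 2) = 1 / (C * z (n + 1) - B)) := by
  have hnum : 1 / z 1 + B ≠ 0 := by
    intro h
    apply h0
    have h1 := hz 1
    field_simp at h ⊢
    linear_combination h
  have hCne : C ≠ 0 := by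
    rw [hC]
    exact div_ne_zero hnum (hz 0)
  have key : ∀ n, C * z n = 1 / z (n + 1) + B := by
    intro n
    induction n with
    | zero =>
      rw [hC, div_mul_cancel₀ _ (hz 0)]
    | succ n ih =>
      have hdn := hd n
      have hzn := hz n
      have hzn1 := hz (n + 1)
      have ih' : C * z n * z (n + 1) = 1 + B * z (n + 1) := by
        rw [ih]; field_simp
      rw [hrec n, one_div_div]
      rw [div_add' _ _ _ hzn]
      rw [eq_div_iff hzn]
      linear_combination ih'
  have hne : ∀ n, C * z (n + 1) - B ≠ 0 := by
    intro n
    rw [key (n + 1)]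
    simpa using one_div_ne_zero (hz (n + 2))
  refine ⟨hCne, hne, fun n => ?_⟩
  have := key (n + 1)
  have h2 : C * z (n + 1) - B = 1 / z (n + 2) := by linear_combination this
  rw [h2, one_div_one_div]
end

section
/- Suppose a sequence (z_n)_{n ≥ -1} of complex numbers satisfies z_n ≠ 0 for all n ≥ -1, z_0 ≠ -1/B, z_{-1} ≠ -1/B, and the recurrence z_{n+1} = z_n/(1 + B z_{n-1} - B z_n) for all n ≥ 0 with all denominators nonzero. Let C = (1/z_0 + B)(1 + B z_{-1}). Then C ≠ 0, z_n ≠ (C - B)/B² for all n ≥ 0, and z_{n+1} = (1 + B z_n)/(C - B - B² z_n) for all n ≥ 0. -/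
/-- `z n` denotes the term of index `n - 1`, so `z 0 = z_{-1}`, `z 1 = z_0`. -/
theorem stmt15 (B : ℂ) (hB : B ≠ 0) (z : ℕ → ℂ)
    (hz : ∀ n, z n ≠ 0) (h0 : z 1 ≠ -1 / B) (hm1 : z 0 ≠ -1 / B)
    (hd : ∀ n, 1 + B * z n - B * z (n + 1) ≠ 0)
    (hrec : ∀ n, z (n + 2) = z (n + 1) / (1 + B * z n - B * z (n + 1)))
    (C : ℂ) (hC : C = (1 / z 1 + B) * (1 + B * z 0)) :
    C ≠ 0 ∧ (∀ n, z (n + 1) ≠ (C - B) / B ^ 2) ∧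
      (∀ n, z (n + 2) = (1 + B * z (n + 1)) / (C - B - B ^ 2 * z (n + 1))) := by
  have h1 : (1 : ℂ) + B * z 1 ≠ 0 := by
    intro h
    apply h0
    field_simp
    linear_combination h
  have hm : (1 : ℂ) + B * z 0 ≠ 0 := by
    intro h
    apply hm1
    field_simp
    linear_combination h
  -- key invariant
  have inv : ∀ n, (1 + B * z (n + 1)) * (1 + B * z n) = C * z (n + 1) := by
    intro n
    induction n with
    | zero =>
      rw [hC]
      field_simp [hz 1]
    | succ k ih =>
      have hdk := hd k
      have h := hrec k
      rw [h]
      field_simp [hdk]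
      linear_combination ih
  have hCz : C ≠ 0 := by
    intro h
    have := inv 0
    rw [h, zero_mul] at this
    exact (mul_ne_zero h1 hm) this
  -- nonvanishing of 1 + B z (n+1) for all n
  have hnv : ∀ n, (1 : ℂ) + B * z (n + 1) ≠ 0 := by
    intro n
    intro h
    have := inv n
    rw [h, zero_mul] at this
    exact mul_ne_zero hCz (hz (n + 1)) this.symm
  -- C - B - B² z(n+1) ≠ 0
  have key : ∀ n, (C - B - B ^ 2 * z (n + 1)) * z (n + 2) = 1 + B * z (n + 1) := by
    intro n
    linear_combination -(inv (n + 1))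
  have hden : ∀ n, C - B - B ^ 2 * z (n + 1) ≠ 0 := by
    intro n h
    have := key n
    rw [h, zero_mul] at this
    exact hnv n this.symm
  refine ⟨hCz, ?_, ?_⟩
  · intro n h
    apply hden n
    rw [h]
    field_simp
    ring
  · intro n
    rw [eq_div_iff (hden n)]
    linear_combination key n
end

section
/- Consider x_{n+1} = (α + β x_n)/(A + B x_n) over ℂ with B ≠ 0, αB - βA ≠ 0, and β + A = 0. If x_0 ≠ -A/B, then the sequence is well-defined for all n, x_{2n} = x_0 for all n ≥ 0, and x_{2n+1} = (α + β x_0)/(A + B x_0) for all n ≥ 0 (i.e., every solution is periodic with period 2). -/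
theorem stmt17 (α β A B : ℂ) (hB : B ≠ 0) (hdet : α * B - β * A ≠ 0) (hβA : β + A = 0)
    (x : ℕ → ℂ) (h0 : x 0 ≠ -A / B)
    (hrec : ∀ n, x (n + 1) = (α + β * x n) / (A + B * x n)) :
    (∀ n, A + B * x n ≠ 0) ∧ (∀ n, x (2 * n) = x 0) ∧
      (∀ n, x (2 * n + 1) = (α + β * x 0) / (A + B * x 0)) := by
  have hβ : β = -A := by linear_combination hβA
  subst hβ
  have hd : A * A + α * B ≠ 0 := by
    intro h; apply hdet; linear_combination h
  have h1 : A + B * x 0 ≠ 0 := by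
    intro h; apply h0
    field_simp
    linear_combination h
  have key : ∀ y : ℂ, A + B * y ≠ 0 →
      A + B * ((α + -A * y) / (A + B * y)) ≠ 0 ∧
      (α + -A * ((α + -A * y) / (A + B * y))) / (A + B * ((α + -A * y) / (A + B * y))) = y := by
    intro y hy
    have e : A + B * ((α + -A * y) / (A + B * y)) = (A * A + α * B) / (A + B * y) := by
      field_simp; ring
    have he : A + B * ((α + -A * y) / (A + B * y)) ≠ 0 := by
      rw [e]; exact div_ne_zero hd hy
    refine ⟨he, ?_⟩
    rw [div_eq_iff he, e]
    rw [mul_div_assoc', mul_div_assoc', eq_div_iff hy, add_mul, div_mul_cancel₀ _ hy]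
    ring
  have hx1 : x 1 = (α + -A * x 0) / (A + B * x 0) := hrec 0
  have per : ∀ n, x (2 * n) = x 0 ∧ x (2 * n + 1) = x 1 := by
    intro n
    induction n with
    | zero => exact ⟨rfl, rfl⟩
    | succ k ih =>
      have h2 : x (2 * k + 2) = x 0 := by
        rw [hrec (2 * k + 1), ih.2, hx1]
        exact (key (x 0) h1).2
      constructor
      · show x (2 * (k + 1)) = x 0
        have : 2 * (k + 1) = 2 * k + 2 := by ring
        rw [this]; exact h2
      · show x (2 * (k + 1) + 1) = x 1
        have : 2 * (k + 1) + 1 = (2 * k + 2) + 1 := by ring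
        rw [this, hrec (2 * k + 2), h2, hx1]
  have h2 : A + B * x 1 ≠ 0 := by
    rw [hx1]; exact (key (x 0) h1).1
  refine ⟨?_, fun n => (per n).1, fun n => by rw [(per n).2, hx1]⟩
  intro n
  rcases Nat.even_or_odd n with ⟨k, hk⟩ | ⟨k, hk⟩
  · rw [hk, ← two_mul, (per k).1]; exact h1
  · rw [hk, (per k).2]; exact h2
end

section
/- Suppose a sequence (z_n)_{n ≥ -1} of nonzero complex numbers satisfies the recurrence z_{n+1} = (z_n² + B z_n - B z_{n-1})/z_{n-1} for all n ≥ 0, and suppose C = (z_0 + B)/z_{-1} = 1. Then z_n = z_0 - nB for all n ≥ 0; consequently, if additionally z_0 = NB for some natural number N ≥ 1, then z_N = 0, a contradiction — hence no such everywhere-nonzero solution exists with C = 1 and z_0 ∈ {nB : n ∈ ℕ, n ≥ 1} when B ≠ 0. -/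
/-- `z n` denotes the term of index `n - 1`, so `z 0 = z_{-1}`, `z 1 = z_0`. -/
theorem stmt19 (B : ℂ) (hB : B ≠ 0) (z : ℕ → ℂ) (hz : ∀ n, z n ≠ 0)
    (hrec : ∀ n, z (n + 2) = ((z (n + 1)) ^ 2 + B * z (n + 1) - B * z n) / z n)
    (hC : (z 1 + B) / z 0 = 1) :
    (∀ n : ℕ, z (n + 1) = z 1 - (n : ℂ) * B) ∧
      (∀ N : ℕ, 1 ≤ N → z 1 ≠ (N : ℂ) * B) := by
  have h0 : z 1 + B = z 0 := by
    rw [div_eq_one_iff_eq (hz 0)] at hC; exact hC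
  -- invariant: z (n+1) + B = z n
  have key : ∀ n, z (n + 1) + B = z n := by
    intro n
    induction n with
    | zero => exact h0
    | succ k ih =>
      have hr := hrec k
      have hk := hz k
      rw [hr]
      field_simp
      linear_combination z (k + 1) * ih
  have main : ∀ n : ℕ, z (n + 1) = z 1 - (n : ℂ) * B := by
    intro n
    induction n with
    | zero => simp
    | succ k ih =>
      have := key (k + 1)
      push_cast
      linear_combination this + ih
  exact ⟨main, by
    intro N hN hz1
    have h := main N
    rw [hz1] at h
    simp at h
    exact hz (N + 1) h⟩
end
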